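/- (Theorem: stability of the extinction equilibrium, stated via the linearization.) Let n ≥ 1, let A be an n×n real sub-generator matrix all of whose complex eigenvalues have negative real part, α ∈ ℝⁿ a probability vector, μ, γ_V, γ_R, ρ_J, μ_J > 0, and φ_J, φ_V ≥ 0 with φ_J < ρ_J + μ_J. Define M as the block matrix on {J} ⊕ {1,…,n} ⊕ {V} ⊕ {R} with block rows [φ_J−(ρ_J+μ_J), 0, φ_V, 0], [ρ_J·α, Aᵀ−μI, 0, γ_R·α], [0, ((−A)𝟙)ᵀ, −(μ+γ_V), 0], [0, 0, γ_V, −(μ+γ_R)] (the Jacobian of the mosquito demographic model at the extinction equilibrium). Then every complex eigenvalue of M has negative real part if and only if N₀ < 1, where N₀ = (ρ_J/((ρ_J+μ_J)−φ_J)) · (φ_V/(μ+γ_V)) · τ · n_G is the basic offspring number. -/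

import Mathlib

open Matrix

/-- Index set of the demographic model: juveniles `J`, biting stages `B₁,…,Bₙ`,
ovipositing `V`, resting `R`. -/
abbrev DemogIdx (n : ℕ) := Fin 1 ⊕ (Fin n ⊕ (Fin 1 ⊕ Fin 1))

/-- The Jacobian `M` of the mosquito demographic model at the extinction
equilibrium, with block rows `[φ_J−(ρ_J+μ_J), 0, φ_V, 0]`,
`[ρ_J α, Aᵀ−μI, 0, γ_R α]`, `[0, ((−A)𝟙)ᵀ, −(μ+γ_V), 0]`, `[0, 0, γ_V, −(μ+γ_R)]`. -/
def Mmat {n : ℕ} (A : Matrix (Fin n) (Fin n) ℝ) (α : Fin n → ℝ)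
    (μ γV γR ρJ μJ φJ φV : ℝ) : Matrix (DemogIdx n) (DemogIdx n) ℝ :=
  Matrix.of fun i j =>
    match i, j with
    | Sum.inl _, Sum.inl _ => φJ - (ρJ + μJ)
    | Sum.inl _, Sum.inr (Sum.inr (Sum.inl _)) => φV
    | Sum.inr (Sum.inl k), Sum.inl _ => ρJ * α k
    | Sum.inr (Sum.inl k), Sum.inr (Sum.inl l) =>
        (Aᵀ - μ • (1 : Matrix (Fin n) (Fin n) ℝ)) k l
    | Sum.inr (Sum.inl k), Sum.inr (Sum.inr (Sum.inr _)) => γR * α k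
    | Sum.inr (Sum.inr (Sum.inl _)), Sum.inr (Sum.inl l) => ((-A) *ᵥ (1 : Fin n → ℝ)) l
    | Sum.inr (Sum.inr (Sum.inl _)), Sum.inr (Sum.inr (Sum.inl _)) => -(μ + γV)
    | Sum.inr (Sum.inr (Sum.inr _)), Sum.inr (Sum.inr (Sum.inl _)) => γV
    | Sum.inr (Sum.inr (Sum.inr _)), Sum.inr (Sum.inr (Sum.inr _)) => -(μ + γR)
    | _, _ => 0

/-- The survival-and-exit probability `τ = αᵀ (μI − A)⁻¹ ((−A)𝟙)`. -/
noncomputable def tau {n : ℕ} (A : Matrix (Fin n) (Fin n) ℝ) (α : Fin n → ℝ) (μ : ℝ) : ℝ :=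
  α ⬝ᵥ ((μ • (1 : Matrix (Fin n) (Fin n) ℝ) - A)⁻¹ *ᵥ ((-A) *ᵥ (1 : Fin n → ℝ)))

/-- The average number of gonotrophic cycles `n_G`. -/
noncomputable def nG {n : ℕ} (A : Matrix (Fin n) (Fin n) ℝ) (α : Fin n → ℝ)
    (μ γV γR : ℝ) : ℝ :=
  (1 - tau A α μ * (γR / (μ + γR)) * (γV / (μ + γV)))⁻¹

open Matrix Finset

section Neumann
variable {n : ℕ} (T : Matrix (Fin n) (Fin n) ℝ) {r : ℝ}

lemma pow_entry_nonneg (hT0 : ∀ i j, 0 ≤ T i j) (N : ℕ) : ∀ i j, 0 ≤ (T ^ N) i j := by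
  induction N with
  | zero => intro i j; by_cases h : i = j <;> simp [pow_zero, Matrix.one_apply, h]
  | succ N ih =>
    intro i j
    rw [pow_succ, Matrix.mul_apply]
    exact Finset.sum_nonneg fun k _ => mul_nonneg (ih i k) (hT0 k j)

lemma pow_rowsum_le (hT0 : ∀ i j, 0 ≤ T i j) (hTr : ∀ i, ∑ j, T i j ≤ r)
    (hr0 : 0 ≤ r) (N : ℕ) : ∀ i, ∑ j, (T ^ N) i j ≤ r ^ N := by
  induction N with
  | zero => intro i; simp [pow_zero, Matrix.one_apply]
  | succ N ih =>
    intro i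
    have key : ∑ j, (T ^ (N + 1)) i j = ∑ k, T i k * ∑ j, (T ^ N) k j := by
      rw [pow_succ']
      simp only [Matrix.mul_apply, Finset.mul_sum]
      exact Finset.sum_comm
    rw [key]
    calc ∑ k, T i k * ∑ j, (T ^ N) k j ≤ ∑ k, T i k * r ^ N :=
          Finset.sum_le_sum fun k _ => mul_le_mul_of_nonneg_left (ih k) (hT0 i k)
      _ = (∑ k, T i k) * r ^ N := by rw [Finset.sum_mul]
      _ ≤ r * r ^ N := mul_le_mul_of_nonneg_right (hTr i) (pow_nonneg hr0 N)
      _ = r ^ (N + 1) := (pow_succ' r N).symm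

lemma pow_entry_le (hT0 : ∀ i j, 0 ≤ T i j) (hTr : ∀ i, ∑ j, T i j ≤ r)
    (hr0 : 0 ≤ r) (N : ℕ) (i j : Fin n) : (T ^ N) i j ≤ r ^ N :=
  le_trans (Finset.single_le_sum (fun k _ => pow_entry_nonneg T hT0 N i k) (Finset.mem_univ j))
    (pow_rowsum_le T hT0 hTr hr0 N i)

lemma one_sub_det_isUnit (hT0 : ∀ i j, 0 ≤ T i j) (hTr : ∀ i, ∑ j, T i j ≤ r)
    (hr1 : r < 1) : IsUnit (1 - T).det := by
  rw [isUnit_iff_ne_zero]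
  intro hdet
  obtain ⟨v, hv, hveq⟩ := Matrix.exists_mulVec_eq_zero_iff.mpr hdet
  have hvT : ∀ i, v i = ∑ j, T i j * v j := by
    intro i
    have h : ((1 - T) *ᵥ v) i = 0 := by rw [hveq]; rfl
    rw [Matrix.sub_mulVec, Matrix.one_mulVec] at h
    have h2 : v i - (T *ᵥ v) i = 0 := h
    simp only [Matrix.mulVec, dotProduct] at h2
    linarith
  obtain ⟨j0, hj0⟩ := Function.ne_iff.mp hv
  obtain ⟨i, -, hi⟩ := Finset.exists_max_image Finset.univ (fun i => |v i|) ⟨j0, Finset.mem_univ j0⟩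
  have hvi : 0 < |v i| := lt_of_lt_of_le (abs_pos.mpr hj0) (hi j0 (Finset.mem_univ j0))
  have hb : |v i| ≤ r * |v i| := by
    calc |v i| = |∑ j, T i j * v j| := by rw [← hvT i]
      _ ≤ ∑ j, |T i j * v j| := Finset.abs_sum_le_sum_abs _ _
      _ = ∑ j, T i j * |v j| := by
          refine Finset.sum_congr rfl fun j _ => ?_
          rw [abs_mul, abs_of_nonneg (hT0 i j)]
      _ ≤ ∑ j, T i j * |v i| :=
          Finset.sum_le_sum fun j _ => mul_le_mul_of_nonneg_left (hi j (Finset.mem_univ j)) (hT0 i j)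
      _ = (∑ j, T i j) * |v i| := by rw [Finset.sum_mul]
      _ ≤ r * |v i| := mul_le_mul_of_nonneg_right (hTr i) (abs_nonneg _)
  nlinarith

lemma one_sub_inv_eq (hT0 : ∀ i j, 0 ≤ T i j) (hTr : ∀ i, ∑ j, T i j ≤ r)
    (hr1 : r < 1) : (1 - T) * (1 - T)⁻¹ = 1 ∧ (1 - T)⁻¹ * (1 - T) = 1 :=
  ⟨Matrix.mul_nonsing_inv _ (one_sub_det_isUnit T hT0 hTr hr1),
   Matrix.nonsing_inv_mul _ (one_sub_det_isUnit T hT0 hTr hr1)⟩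

lemma one_sub_inv_nonneg (hT0 : ∀ i j, 0 ≤ T i j) (hTr : ∀ i, ∑ j, T i j ≤ r)
    (hr0 : 0 ≤ r) (hr1 : r < 1) : ∀ i j, 0 ≤ (1 - T)⁻¹ i j := by
  intro i j
  set K := (1 - T)⁻¹ with hKdef
  have hK1 : (1 - T) * K = 1 := (one_sub_inv_eq T hT0 hTr hr1).1
  have hK2 : K * (1 - T) = 1 := (one_sub_inv_eq T hT0 hTr hr1).2
  have key : ∀ N : ℕ, (∑ k ∈ Finset.range N, T ^ k) = K - T ^ N * K := by
    intro N
    have h1 : (∑ k ∈ Finset.range N, T ^ k) * (1 - T) = 1 - T ^ N := by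
      have h2 : (∑ k ∈ Finset.range N, T ^ k) * (1 - T)
          = -((∑ k ∈ Finset.range N, T ^ k) * (T - 1)) := by
        simp only [Matrix.mul_sub, Matrix.mul_one, neg_sub]
      rw [h2, geom_sum_mul, neg_sub]
    have h3 := congrArg (· * K) h1
    simpa [Matrix.mul_assoc, hK1, Matrix.sub_mul, Matrix.one_mul] using h3
  set C := ∑ k, |K k j| with hC
  have hineq : ∀ N : ℕ, -(C * r ^ N) ≤ K i j := by
    intro N
    have hKeq : K i j = (∑ k ∈ Finset.range N, T ^ k) i j + (T ^ N * K) i j := by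
      have := congrFun (congrFun (key N) i) j
      simp only [Matrix.sub_apply] at this
      linarith
    have h1 : 0 ≤ (∑ k ∈ Finset.range N, T ^ k) i j := by
      rw [Matrix.sum_apply]
      exact Finset.sum_nonneg fun k _ => pow_entry_nonneg T hT0 k i j
    have h2 : -(C * r ^ N) ≤ (T ^ N * K) i j := by
      rw [Matrix.mul_apply]
      have : ∀ k ∈ Finset.univ, -(r ^ N * |K k j|) ≤ (T ^ N) i k * K k j := by
        intro k _
        have habs : |(T ^ N) i k * K k j| ≤ r ^ N * |K k j| := by
          rw [abs_mul]
          exact mul_le_mul_of_nonneg_right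
            (by rw [abs_of_nonneg (pow_entry_nonneg T hT0 N i k)]
                exact pow_entry_le T hT0 hTr hr0 N i k) (abs_nonneg _)
        linarith [neg_abs_le ((T ^ N) i k * K k j)]
      calc -(C * r ^ N) = ∑ k, -(r ^ N * |K k j|) := by
            simp [hC, Finset.sum_mul, Finset.mul_sum, mul_comm, ← Finset.sum_neg_distrib]
        _ ≤ ∑ k, (T ^ N) i k * K k j := Finset.sum_le_sum this
    linarith
  have hlim : Filter.Tendsto (fun N : ℕ => -(C * r ^ N)) Filter.atTop (nhds 0) := by
    have := Filter.Tendsto.const_mul C (tendsto_pow_atTop_nhds_zero_of_lt_one hr0 hr1)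
    simpa using this.neg
  exact le_of_tendsto' hlim hineq

lemma one_sub_inv_eq_one_add (hT0 : ∀ i j, 0 ≤ T i j) (hTr : ∀ i, ∑ j, T i j ≤ r)
    (hr1 : r < 1) : (1 - T)⁻¹ = 1 + (1 - T)⁻¹ * T := by
  have hK2 : (1 - T)⁻¹ * (1 - T) = 1 := (one_sub_inv_eq T hT0 hTr hr1).2
  rw [Matrix.mul_sub, Matrix.mul_one] at hK2
  exact sub_eq_iff_eq_add.mp hK2

end Neumann
open Matrix Finset

section Resolvent
variable {n : ℕ} {A : Matrix (Fin n) (Fin n) ℝ}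

theorem subgen_resolvent (hoff : ∀ i j, i ≠ j → 0 ≤ A i j) (hrow : ∀ i, ∑ j, A i j ≤ 0)
    {ν : ℝ} (hν : 0 < ν) :
    IsUnit (ν • (1 : Matrix (Fin n) (Fin n) ℝ) - A).det ∧
    (∀ i j, 0 ≤ (ν • (1 : Matrix (Fin n) (Fin n) ℝ) - A)⁻¹ i j) ∧
    (∀ k, 0 < (ν • (1 : Matrix (Fin n) (Fin n) ℝ) - A)⁻¹ k k) := by
  set m := ∑ i, |A i i| with hm
  have hm0 : 0 ≤ m := Finset.sum_nonneg fun i _ => abs_nonneg _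
  have hmA : ∀ i, -A i i ≤ m := by
    intro i
    calc -A i i ≤ |A i i| := neg_le_abs _
      _ ≤ m := Finset.single_le_sum (fun k (_ : k ∈ Finset.univ) => abs_nonneg (A k k))
          (Finset.mem_univ i)
  set c := ν + m with hc
  have hc0 : 0 < c := by positivity
  set T : Matrix (Fin n) (Fin n) ℝ := c⁻¹ • (A + m • 1) with hT
  have hT0 : ∀ i j, 0 ≤ T i j := by
    intro i j
    have : T i j = c⁻¹ * ((A + m • (1 : Matrix (Fin n) (Fin n) ℝ)) i j) := rfl
    rw [this]
    apply mul_nonneg (by positivity)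
    by_cases h : i = j
    · subst h; simp [Matrix.add_apply, Matrix.smul_apply, Matrix.one_apply]
      linarith [hmA i]
    · simp [Matrix.add_apply, Matrix.smul_apply, Matrix.one_apply, h]
      exact hoff i j h
  set r := m / c with hr
  have hr0 : 0 ≤ r := by positivity
  have hr1 : r < 1 := by rw [hr, div_lt_one hc0]; linarith
  have hTr : ∀ i, ∑ j, T i j ≤ r := by
    intro i
    have hsum : ∑ j, T i j = c⁻¹ * (∑ j, A i j + m) := by
      have hTapp : ∀ j, T i j = c⁻¹ * ((A + m • (1 : Matrix (Fin n) (Fin n) ℝ)) i j) :=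
        fun j => rfl
      simp_rw [hTapp, ← Finset.mul_sum]
      congr 1
      simp [Matrix.add_apply, Matrix.smul_apply, Matrix.one_apply, Finset.sum_add_distrib]
    rw [hsum, hr]
    rw [div_eq_inv_mul]
    apply mul_le_mul_of_nonneg_left _ (by positivity)
    linarith [hrow i]
  have hPT : ν • (1 : Matrix (Fin n) (Fin n) ℝ) - A = c • (1 - T) := by
    have h1 : c • T = A + m • 1 := by
      rw [hT, smul_smul, mul_inv_cancel₀ hc0.ne', one_smul]
    rw [smul_sub, h1]
    ext i j
    by_cases h : i = j <;>
      simp [Matrix.sub_apply, Matrix.add_apply, Matrix.smul_apply, Matrix.one_apply, h, hc] <;>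
      ring
  have hdet' : IsUnit (1 - T).det := one_sub_det_isUnit T hT0 hTr hr1
  have hdet : IsUnit (ν • (1 : Matrix (Fin n) (Fin n) ℝ) - A).det := by
    rw [hPT, Matrix.det_smul, isUnit_iff_ne_zero]
    exact mul_ne_zero (pow_ne_zero _ hc0.ne') (isUnit_iff_ne_zero.mp hdet')
  have hKeq : (ν • (1 : Matrix (Fin n) (Fin n) ℝ) - A)⁻¹ = c⁻¹ • (1 - T)⁻¹ := by
    apply Matrix.inv_eq_right_inv
    rw [hPT, Matrix.mul_smul, Matrix.smul_mul, smul_smul, inv_mul_cancel₀ hc0.ne', one_smul,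
      Matrix.mul_nonsing_inv _ hdet']
  have hK'0 := one_sub_inv_nonneg T hT0 hTr hr0 hr1
  have hK'diag : ∀ k, (1 : ℝ) ≤ (1 - T)⁻¹ k k := by
    intro k
    have h := congrFun (congrFun (one_sub_inv_eq_one_add T hT0 hTr hr1) k) k
    rw [Matrix.add_apply, Matrix.one_apply_eq, Matrix.mul_apply] at h
    have : 0 ≤ ∑ l, (1 - T)⁻¹ k l * T l k :=
      Finset.sum_nonneg fun l _ => mul_nonneg (hK'0 k l) (hT0 l k)
    linarith
  refine ⟨hdet, ?_, ?_⟩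
  · intro i j
    rw [hKeq, Matrix.smul_apply]
    exact mul_nonneg (by positivity) (hK'0 i j)
  · intro k
    rw [hKeq, Matrix.smul_apply]
    have := hK'diag k
    have hci : 0 < c⁻¹ := by positivity
    calc (0:ℝ) < c⁻¹ * 1 := by simpa using hci
      _ ≤ c⁻¹ * (1 - T)⁻¹ k k := by
        apply mul_le_mul_of_nonneg_left (hK'diag k) hci.le
    
end Resolvent
open Matrix Finset

section Spectral
variable {ι : Type*} [Fintype ι] [DecidableEq ι]

lemma spectrum_exists_eigvec {N : Matrix ι ι ℂ} {z : ℂ} (h : z ∈ spectrum ℂ N) :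
    ∃ v : ι → ℂ, v ≠ 0 ∧ N *ᵥ v = z • v := by
  rw [spectrum.mem_iff] at h
  rw [Algebra.algebraMap_eq_smul_one, Matrix.isUnit_iff_isUnit_det, isUnit_iff_ne_zero,
    not_not] at h
  obtain ⟨v, hv, hveq⟩ := Matrix.exists_mulVec_eq_zero_iff.mpr h
  refine ⟨v, hv, ?_⟩
  rw [Matrix.sub_mulVec, Matrix.smul_mulVec, Matrix.one_mulVec, sub_eq_zero] at hveq
  exact hveq.symm

lemma real_eig_mem_spectrum {M : Matrix ι ι ℝ} {s : ℝ} {v : ι → ℝ} (hv : v ≠ 0)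
    (h : M *ᵥ v = s • v) : (s : ℂ) ∈ spectrum ℂ (M.map (Complex.ofReal ·)) := by
  rw [spectrum.mem_iff, Algebra.algebraMap_eq_smul_one, Matrix.isUnit_iff_isUnit_det,
    isUnit_iff_ne_zero, not_not]
  have h0 : (s • (1 : Matrix ι ι ℝ) - M).det = 0 := by
    rw [← Matrix.exists_mulVec_eq_zero_iff]
    refine ⟨v, hv, ?_⟩
    rw [Matrix.sub_mulVec, Matrix.smul_mulVec, Matrix.one_mulVec, h, sub_self]
  have hmap : (s : ℂ) • (1 : Matrix ι ι ℂ) - M.map (Complex.ofReal ·)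
      = (s • (1 : Matrix ι ι ℝ) - M).map (Complex.ofReal ·) := by
    ext i j
    by_cases hij : i = j <;>
      simp [Matrix.map_apply, Matrix.sub_apply, Matrix.smul_apply, Matrix.one_apply, hij]
  have hdet2 : ((s • (1 : Matrix ι ι ℝ) - M).map (Complex.ofReal ·)).det
      = ((s • (1 : Matrix ι ι ℝ) - M).det : ℂ) := by
    have h3 := (RingHom.map_det Complex.ofRealHom (s • (1 : Matrix ι ι ℝ) - M)).symm
    rw [RingHom.mapMatrix_apply] at h3
    exact h3
  rw [hmap, hdet2, h0, Complex.ofReal_zero]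

lemma metzler_stable (M : Matrix ι ι ℝ)
    (hoff : ∀ i j, i ≠ j → 0 ≤ M i j) (x : ι → ℝ) (hx : ∀ i, 0 < x i)
    (hMx : ∀ i, (M *ᵥ x) i < 0) :
    ∀ z ∈ spectrum ℂ (M.map (Complex.ofReal ·)), z.re < 0 := by
  intro z hz
  obtain ⟨v, hv, hev⟩ := spectrum_exists_eigvec hz
  obtain ⟨j0, hj0⟩ := Function.ne_iff.mp hv
  obtain ⟨i, -, hi⟩ := Finset.exists_max_image Finset.univ
    (fun i => ‖v i‖ / x i) ⟨j0, Finset.mem_univ j0⟩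
  have hvi : 0 < ‖v i‖ := by
    have h1 : 0 < ‖v j0‖ / x j0 :=
      div_pos (norm_pos_iff.mpr (by simpa using hj0)) (hx j0)
    have h3 : 0 < ‖v i‖ / x i := lt_of_lt_of_le h1 (hi j0 (Finset.mem_univ j0))
    rcases div_pos_iff.mp h3 with ⟨h, _⟩ | ⟨_, h⟩
    · exact h
    · linarith [hx i]
  have hrow : ∑ k, (M i k : ℂ) * v k = z * v i := by
    have h := congrFun hev i
    simpa [Matrix.mulVec, dotProduct, Matrix.map_apply, Pi.smul_apply,
      smul_eq_mul] using h
  have hsplit : (z - (M i i : ℂ)) * v i = ∑ k ∈ Finset.univ.erase i, (M i k : ℂ) * v k := by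
    have h2 : (M i i : ℂ) * v i + ∑ k ∈ Finset.univ.erase i, (M i k : ℂ) * v k
        = ∑ k, (M i k : ℂ) * v k :=
      Finset.add_sum_erase Finset.univ (fun k => (M i k : ℂ) * v k) (Finset.mem_univ i)
    rw [← h2] at hrow
    linear_combination (-1 : ℂ) * hrow
  set S := ∑ k ∈ Finset.univ.erase i, M i k * x k with hS
  have hratio : ∀ k, ‖v k‖ ≤ x k * (‖v i‖ / x i) := by
    intro k
    have h := hi k (Finset.mem_univ k)
    rw [div_le_div_iff₀ (hx k) (hx i)] at h
    have heq : x k * (‖v i‖ / x i) = x k * ‖v i‖ / x i := by ring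
    rw [heq, le_div_iff₀ (hx i)]
    nlinarith
  have habs : ‖z - (M i i : ℂ)‖ * ‖v i‖
      ≤ S * (‖v i‖ / x i) := by
    rw [← norm_mul, hsplit]
    calc ‖∑ k ∈ Finset.univ.erase i, (M i k : ℂ) * v k‖
        ≤ ∑ k ∈ Finset.univ.erase i, ‖(M i k : ℂ) * v k‖ :=
          norm_sum_le _ _
      _ ≤ ∑ k ∈ Finset.univ.erase i, M i k * x k * (‖v i‖ / x i) := by
          apply Finset.sum_le_sum
          intro k hk
          have hMik : 0 ≤ M i k := hoff i k (Ne.symm (Finset.ne_of_mem_erase hk))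
          rw [norm_mul, Complex.norm_real, Real.norm_eq_abs, abs_of_nonneg hMik]
          calc M i k * ‖v k‖
              ≤ M i k * (x k * (‖v i‖ / x i)) :=
                mul_le_mul_of_nonneg_left (hratio k) hMik
            _ = M i k * x k * (‖v i‖ / x i) := by ring
      _ = S * (‖v i‖ / x i) := by rw [hS, Finset.sum_mul]
  have hzb : ‖z - (M i i : ℂ)‖ ≤ S / x i := by
    have h2 : ‖z - (M i i : ℂ)‖ * ‖v i‖
        ≤ (S / x i) * ‖v i‖ := by
      calc ‖z - (M i i : ℂ)‖ * ‖v i‖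
          ≤ S * (‖v i‖ / x i) := habs
        _ = (S / x i) * ‖v i‖ := by ring
    exact le_of_mul_le_mul_right h2 hvi
  have hre : z.re - M i i ≤ ‖z - (M i i : ℂ)‖ := by
    have := Complex.re_le_norm (z - (M i i : ℂ))
    simpa [Complex.sub_re, Complex.ofReal_re] using this
  have hfin : M i i * x i + S < 0 := by
    have h := hMx i
    rw [Matrix.mulVec, dotProduct] at h
    have h2 : M i i * x i + S = ∑ k, M i k * x k :=
      Finset.add_sum_erase _ (fun k => M i k * x k) (Finset.mem_univ i)
    linarith [h2 ▸ h]
  have hxi := hx i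
  have : z.re ≤ M i i + S / x i := by linarith [hzb, hre]
  have hfin2 : M i i + S / x i < 0 := by
    have h3 : (M i i * x i + S) / x i < 0 := div_neg_of_neg_of_pos hfin hxi
    have h4 : (M i i * x i + S) / x i = M i i + S / x i := by field_simp
    linarith [h4 ▸ h3]
  linarith

end Spectral
open Matrix Finset

section Model
variable {n : ℕ} {A : Matrix (Fin n) (Fin n) ℝ} {α : Fin n → ℝ}

lemma bvec_nonneg (hrow : ∀ i, ∑ j, A i j ≤ 0) :
    ∀ i, 0 ≤ ((-A) *ᵥ (1 : Fin n → ℝ)) i := by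
  intro i
  simp only [Matrix.mulVec, dotProduct, Pi.one_apply, mul_one, Matrix.neg_apply]
  simp only [Finset.sum_neg_distrib]
  linarith [hrow i]

lemma Kb_bounds (hoff : ∀ i j, i ≠ j → 0 ≤ A i j) (hrow : ∀ i, ∑ j, A i j ≤ 0)
    {ν : ℝ} (hν : 0 < ν) (i : Fin n) :
    0 ≤ ((ν • (1 : Matrix (Fin n) (Fin n) ℝ) - A)⁻¹ *ᵥ ((-A) *ᵥ (1 : Fin n → ℝ))) i ∧
    ((ν • (1 : Matrix (Fin n) (Fin n) ℝ) - A)⁻¹ *ᵥ ((-A) *ᵥ (1 : Fin n → ℝ))) i ≤ 1 := by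
  obtain ⟨hdet, hK0, -⟩ := subgen_resolvent hoff hrow hν
  set b : Fin n → ℝ := (-A) *ᵥ (1 : Fin n → ℝ) with hb
  set K := (ν • (1 : Matrix (Fin n) (Fin n) ℝ) - A)⁻¹ with hK
  have hKP : K * (ν • (1 : Matrix (Fin n) (Fin n) ℝ) - A) = 1 := Matrix.nonsing_inv_mul _ hdet
  have hPone : (ν • (1 : Matrix (Fin n) (Fin n) ℝ) - A) *ᵥ (1 : Fin n → ℝ)
      = fun i => ν + b i := by
    funext i
    simp only [Matrix.mulVec, dotProduct, Pi.one_apply, mul_one, Matrix.sub_apply,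
      Matrix.smul_apply, Matrix.one_apply, smul_eq_mul, hb, Matrix.neg_apply,
      Finset.sum_sub_distrib, Finset.sum_neg_distrib]
    simp [Finset.sum_ite_eq]
    ring
  have hK1 : K *ᵥ (fun i => ν + b i) = (1 : Fin n → ℝ) := by
    rw [← hPone, Matrix.mulVec_mulVec, hKP, Matrix.one_mulVec]
  have hK1i : ∑ j, K i j * (ν + b j) = 1 := by
    have := congrFun hK1 i
    simpa [Matrix.mulVec, dotProduct] using this
  have hKb : (K *ᵥ b) i = ∑ j, K i j * b j := rfl
  have hb0 := bvec_nonneg hrow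
  constructor
  · rw [hKb]
    exact Finset.sum_nonneg fun j _ => mul_nonneg (hK0 i j) (hb0 j)
  · rw [hKb]
    have hsplit : ∑ j, K i j * (ν + b j) = ν * ∑ j, K i j + ∑ j, K i j * b j := by
      rw [Finset.mul_sum, ← Finset.sum_add_distrib]
      exact Finset.sum_congr rfl fun j _ => by ring
    have h1 : 0 ≤ ν * ∑ j, K i j :=
      mul_nonneg hν.le (Finset.sum_nonneg fun j _ => hK0 i j)
    rw [hsplit] at hK1i
    linarith

lemma tau_nu_bounds (hoff : ∀ i j, i ≠ j → 0 ≤ A i j) (hrow : ∀ i, ∑ j, A i j ≤ 0)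
    (hα0 : ∀ i, 0 ≤ α i) (hα1 : ∑ i, α i = 1) {ν : ℝ} (hν : 0 < ν) :
    0 ≤ α ⬝ᵥ ((ν • (1 : Matrix (Fin n) (Fin n) ℝ) - A)⁻¹ *ᵥ ((-A) *ᵥ (1 : Fin n → ℝ))) ∧
    α ⬝ᵥ ((ν • (1 : Matrix (Fin n) (Fin n) ℝ) - A)⁻¹ *ᵥ ((-A) *ᵥ (1 : Fin n → ℝ))) ≤ 1 := by
  constructor
  · exact Finset.sum_nonneg fun i _ =>
      mul_nonneg (hα0 i) (Kb_bounds hoff hrow hν i).1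
  · calc α ⬝ᵥ ((ν • (1 : Matrix (Fin n) (Fin n) ℝ) - A)⁻¹ *ᵥ ((-A) *ᵥ (1 : Fin n → ℝ)))
        ≤ ∑ i, α i * 1 := Finset.sum_le_sum fun i _ =>
          mul_le_mul_of_nonneg_left (Kb_bounds hoff hrow hν i).2 (hα0 i)
      _ = 1 := by simp [hα1]

lemma Mmat_mulVec (μ γV γR ρJ μJ φJ φV : ℝ) (xJ xV xR : ℝ) (xB : Fin n → ℝ) :
    (Mmat A α μ γV γR ρJ μJ φJ φV *ᵥ
        Sum.elim (fun _ => xJ) (Sum.elim xB (Sum.elim (fun _ => xV) (fun _ => xR))))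
      = Sum.elim (fun _ : Fin 1 => (φJ - (ρJ + μJ)) * xJ + φV * xV)
          (Sum.elim (fun k => ρJ * α k * xJ
              + ((Aᵀ - μ • (1 : Matrix (Fin n) (Fin n) ℝ)) *ᵥ xB) k + γR * α k * xR)
            (Sum.elim (fun _ : Fin 1 => ((-A) *ᵥ (1 : Fin n → ℝ)) ⬝ᵥ xB - (μ + γV) * xV)
              (fun _ : Fin 1 => γV * xV - (μ + γR) * xR))) := by
  funext i
  rcases i with i0 | i
  · simp [Mmat, Matrix.mulVec, dotProduct, Fintype.sum_sum_type]
  rcases i with k | i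
  · simp [Mmat, Matrix.mulVec, dotProduct, Fintype.sum_sum_type]
    ring
  rcases i with i0 | i0
  · simp [Mmat, Matrix.mulVec, dotProduct, Fintype.sum_sum_type]
    ring
  · simp [Mmat, Matrix.mulVec, dotProduct, Fintype.sum_sum_type]
    ring

lemma Mmat_offdiag (hoff : ∀ i j, i ≠ j → 0 ≤ A i j) (hrow : ∀ i, ∑ j, A i j ≤ 0)
    (hα0 : ∀ i, 0 ≤ α i) {μ γV γR ρJ μJ φJ φV : ℝ}
    (hγV : 0 < γV) (hγR : 0 < γR) (hρJ : 0 < ρJ) (hφV : 0 ≤ φV) :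
    ∀ i j, i ≠ j → 0 ≤ Mmat A α μ γV γR ρJ μJ φJ φV i j := by
  intro i j hij
  rcases i with i0 | i <;> rcases j with j0 | j
  · exact absurd (by rw [Subsingleton.elim i0 j0]) hij
  · rcases j with l | j
    · simp [Mmat]
    rcases j with j0 | j0
    · simp [Mmat]; exact hφV
    · simp [Mmat]
  · rcases i with k | i
    · simp [Mmat]; exact mul_nonneg hρJ.le (hα0 k)
    rcases i with i0 | i0 <;> simp [Mmat]
  · rcases i with k | i <;> rcases j with l | j
    · by_cases hkl : k = l
      · exact absurd (by rw [hkl]) hij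
      · simp only [Mmat, Matrix.of_apply, Matrix.sub_apply, Matrix.transpose_apply,
          Matrix.smul_apply, Matrix.one_apply, smul_eq_mul]
        rw [if_neg hkl]
        simpa using hoff l k (fun h => hkl h.symm)
    · rcases j with j0 | j0
      · simp [Mmat]
      · simp [Mmat]; exact mul_nonneg hγR.le (hα0 k)
    · rcases i with i0 | i0
      · simp [Mmat]; exact bvec_nonneg hrow l
      · simp [Mmat]
    · rcases i with i0 | i0 <;> rcases j with j0 | j0
      · exact absurd (by rw [Subsingleton.elim i0 j0]) hij
      · simp [Mmat]
      · simp [Mmat]; exact hγV.le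
      · exact absurd (by rw [Subsingleton.elim i0 j0]) hij

end Model
open Matrix Finset

section Main
variable {n : ℕ}

lemma stability_of_detS (A : Matrix (Fin n) (Fin n) ℝ)
    (hoff : ∀ i j, i ≠ j → 0 ≤ A i j) (hrow : ∀ i, ∑ j, A i j ≤ 0)
    (α : Fin n → ℝ) (hα0 : ∀ i, 0 ≤ α i) (hα1 : ∑ i, α i = 1)
    (μ γV γR ρJ μJ φJ φV : ℝ)
    (hμ : 0 < μ) (hγV : 0 < γV) (hγR : 0 < γR) (hρJ : 0 < ρJ) (hμJ : 0 < μJ)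
    (hφJ : 0 ≤ φJ) (hφV : 0 ≤ φV) (hφJ' : φJ < ρJ + μJ)
    (hN : 0 < (ρJ + μJ - φJ) * (μ + γV) * (μ + γR)
        - tau A α μ * (ρJ * φV * (μ + γR) + γR * γV * (ρJ + μJ - φJ))) :
    ∀ z ∈ spectrum ℂ ((Mmat A α μ γV γR ρJ μJ φJ φV).map (Complex.ofReal ·)), z.re < 0 := by
  have ha : 0 < ρJ + μJ - φJ := by linarith
  obtain ⟨hdet, hK0, hKdiag⟩ := subgen_resolvent hoff hrow hμ
  set b : Fin n → ℝ := (-A) *ᵥ (1 : Fin n → ℝ) with hb_def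
  set K := (μ • (1 : Matrix (Fin n) (Fin n) ℝ) - A)⁻¹ with hK_def
  have hτeq : tau A α μ = α ⬝ᵥ (K *ᵥ b) := rfl
  set τ := tau A α μ with hτ_def
  obtain ⟨hτ0, hτ1⟩ := tau_nu_bounds hoff hrow hα0 hα1 (A := A) hμ
  have hτ0' : 0 ≤ τ := hτ0
  have hτ1' : τ ≤ 1 := hτ1
  have hb0 := bvec_nonneg (A := A) hrow
  have hKb := fun i => Kb_bounds hoff hrow (A := A) hμ i
  have hKP : K * (μ • (1 : Matrix (Fin n) (Fin n) ℝ) - A) = 1 := Matrix.nonsing_inv_mul _ hdet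
  have hPKT : (μ • (1 : Matrix (Fin n) (Fin n) ℝ) - A)ᵀ * Kᵀ = 1 := by
    rw [← Matrix.transpose_mul, hKP, Matrix.transpose_one]
  have hAT : Aᵀ - μ • (1 : Matrix (Fin n) (Fin n) ℝ)
      = -((μ • (1 : Matrix (Fin n) (Fin n) ℝ) - A)ᵀ) := by
    rw [Matrix.transpose_sub, Matrix.transpose_smul, Matrix.transpose_one, neg_sub]
  set C₁ := ∑ i, (K *ᵥ b) i with hC₁_def
  have hC₁0 : 0 ≤ C₁ := Finset.sum_nonneg fun i _ => (hKb i).1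
  set w₀ := ρJ * (φV / (ρJ + μJ - φJ)) + γR * (γV / (μ + γR)) with hw₀_def
  have hw₀0 : 0 ≤ w₀ := by positivity
  have hgap : τ * w₀ < μ + γV := by
    have hw₀ad : w₀ * ((ρJ + μJ - φJ) * (μ + γR))
        = ρJ * φV * (μ + γR) + γR * γV * (ρJ + μJ - φJ) := by
      rw [hw₀_def]; field_simp
    have had : 0 < (ρJ + μJ - φJ) * (μ + γR) := by positivity
    have h2 : τ * w₀ * ((ρJ + μJ - φJ) * (μ + γR))
        < (μ + γV) * ((ρJ + μJ - φJ) * (μ + γR)) := by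
      have e1 : τ * w₀ * ((ρJ + μJ - φJ) * (μ + γR))
          = τ * (ρJ * φV * (μ + γR) + γR * γV * (ρJ + μJ - φJ)) := by
        rw [← hw₀ad]; ring
      have e2 : (μ + γV) * ((ρJ + μJ - φJ) * (μ + γR))
          = (ρJ + μJ - φJ) * (μ + γV) * (μ + γR) := by ring
      rw [e1, e2]; linarith
    exact lt_of_mul_lt_mul_right h2 had.le
  set sgap := (μ + γV) - τ * w₀ with hsgap_def
  have hsgap : 0 < sgap := by rw [hsgap_def]; linarith
  set q := τ * (ρJ + γR) with hq_def
  have hq0 : 0 ≤ q := mul_nonneg hτ0' (by linarith)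
  set δ := sgap / (2 * (q + 1)) with hδ_def
  have hδ : 0 < δ := by positivity
  set ε := sgap / (2 * (C₁ + 1)) with hε_def
  have hε : 0 < ε := by positivity
  have hδeq : 2 * (q + 1) * δ = sgap := by rw [hδ_def]; field_simp
  have hεeq : 2 * (C₁ + 1) * ε = sgap := by rw [hε_def]; field_simp
  set xJ := φV / (ρJ + μJ - φJ) + δ with hxJ_def
  have hxJ : 0 < xJ := by positivity
  set xR := γV / (μ + γR) + δ with hxR_def
  have hxR : 0 < xR := by positivity
  set w := ρJ * xJ + γR * xR with hw_def
  have hww₀ : w = w₀ + (ρJ + γR) * δ := by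
    rw [hw_def, hw₀_def, hxJ_def, hxR_def]; ring
  have hw0 : 0 < w := by
    have h1 : 0 < (ρJ + γR) * δ := by positivity
    rw [hww₀]; linarith
  set xB := Kᵀ *ᵥ (fun j => w * α j + ε) with hxB_def
  have hxB : ∀ k, 0 < xB k := by
    intro k
    have hxBk : xB k = ∑ j, K j k * (w * α j + ε) := by
      rw [hxB_def]
      simp [Matrix.mulVec, dotProduct, Matrix.transpose_apply]
    rw [hxBk]
    have h1 : 0 < K k k * (w * α k + ε) :=
      mul_pos (hKdiag k) (add_pos_of_nonneg_of_pos (mul_nonneg hw0.le (hα0 k)) hε)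
    have h2 : K k k * (w * α k + ε) ≤ ∑ j, K j k * (w * α j + ε) :=
      Finset.single_le_sum (fun j _ => mul_nonneg (hK0 j k)
        (add_nonneg (mul_nonneg hw0.le (hα0 j)) hε.le)) (Finset.mem_univ k)
    linarith
  have hABx : (Aᵀ - μ • (1 : Matrix (Fin n) (Fin n) ℝ)) *ᵥ xB
      = fun j => -(w * α j + ε) := by
    rw [hAT, Matrix.neg_mulVec, hxB_def, Matrix.mulVec_mulVec, hPKT, Matrix.one_mulVec]
    rfl
  have hbxB : b ⬝ᵥ xB = w * τ + ε * C₁ := by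
    rw [hxB_def, Matrix.dotProduct_mulVec, Matrix.vecMul_transpose]
    have hstep : (K *ᵥ b) ⬝ᵥ (fun j => w * α j + ε)
        = ∑ j, ((K *ᵥ b) j * α j * w + (K *ᵥ b) j * ε) := by
      simp only [dotProduct]
      exact Finset.sum_congr rfl fun j _ => by ring
    rw [hstep, Finset.sum_add_distrib, ← Finset.sum_mul, ← Finset.sum_mul]
    have hτsum : ∑ j, (K *ᵥ b) j * α j = τ := by
      rw [hτeq, dotProduct]
      exact Finset.sum_congr rfl fun j _ => by ring
    rw [hτsum, hC₁_def]
    ring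
  clear_value b K τ C₁ w₀ sgap q δ ε xJ xR w xB
  set x : DemogIdx n → ℝ :=
    Sum.elim (fun _ => xJ) (Sum.elim xB (Sum.elim (fun _ => (1 : ℝ)) (fun _ => xR)))
    with hx_def
  clear_value x
  have hxpos : ∀ i, 0 < x i := by
    intro i
    rw [hx_def]
    rcases i with i0 | i
    · simp only [Sum.elim_inl]; exact hxJ
    rcases i with k | i
    · simp only [Sum.elim_inr, Sum.elim_inl]; exact hxB k
    rcases i with i0 | i0
    · simp only [Sum.elim_inr, Sum.elim_inl]; norm_num
    · simp only [Sum.elim_inr]; exact hxR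
  apply metzler_stable _ (Mmat_offdiag hoff hrow hα0 hγV hγR hρJ hφV) x hxpos
  intro i
  rw [hx_def, Mmat_mulVec]
  rcases i with i0 | i
  · simp only [Sum.elim_inl]
    have hval : (φJ - (ρJ + μJ)) * xJ + φV * 1 = -((ρJ + μJ - φJ) * δ) := by
      rw [hxJ_def]; field_simp; ring
    rw [hval]
    have := mul_pos ha hδ
    linarith
  rcases i with k | i
  · simp only [Sum.elim_inr, Sum.elim_inl]
    rw [hABx]
    have hval : ρJ * α k * xJ + -(w * α k + ε) + γR * α k * xR = -ε := by
      rw [hw_def]; ring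
    rw [hval]
    linarith
  rcases i with i0 | i0
  · simp only [Sum.elim_inr, Sum.elim_inl]
    rw [← hb_def, hbxB]
    have h6 : w * τ = τ * w₀ + q * δ := by rw [hww₀, hq_def]; ring
    have h5 : q * δ < sgap / 2 := by
      have he : sgap / 2 = q * δ + δ := by rw [← hδeq]; ring
      rw [he]; linarith
    have h7 : ε * C₁ < sgap / 2 := by
      have he : sgap / 2 = C₁ * ε + ε := by rw [← hεeq]; ring
      rw [he]; linarith
    have hsg : sgap = (μ + γV) - τ * w₀ := hsgap_def
    linarith
  · simp only [Sum.elim_inr]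
    have hval : γV * 1 - (μ + γR) * xR = -((μ + γR) * δ) := by
      rw [hxR_def]; field_simp; ring
    rw [hval]
    have hmd : 0 < (μ + γR) * δ := mul_pos (show (0:ℝ) < μ + γR by linarith) hδ
    linarith

end Main
open Matrix Finset

section Main2
variable {n : ℕ}

lemma detS_of_stability (A : Matrix (Fin n) (Fin n) ℝ)
    (hoff : ∀ i j, i ≠ j → 0 ≤ A i j) (hrow : ∀ i, ∑ j, A i j ≤ 0)
    (α : Fin n → ℝ) (hα0 : ∀ i, 0 ≤ α i) (hα1 : ∑ i, α i = 1)
    (μ γV γR ρJ μJ φJ φV : ℝ)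
    (hμ : 0 < μ) (hγV : 0 < γV) (hγR : 0 < γR) (hρJ : 0 < ρJ) (hμJ : 0 < μJ)
    (hφJ : 0 ≤ φJ) (hφV : 0 ≤ φV) (hφJ' : φJ < ρJ + μJ)
    (hstab : ∀ z ∈ spectrum ℂ ((Mmat A α μ γV γR ρJ μJ φJ φV).map (Complex.ofReal ·)),
      z.re < 0) :
    0 < (ρJ + μJ - φJ) * (μ + γV) * (μ + γR)
        - tau A α μ * (ρJ * φV * (μ + γR) + γR * γV * (ρJ + μJ - φJ)) := by
  have ha : 0 < ρJ + μJ - φJ := by linarith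
  by_contra hle
  push_neg at hle
  set b : Fin n → ℝ := (-A) *ᵥ (1 : Fin n → ℝ) with hb_def
  set tt : ℝ → ℝ := fun s =>
    (((s + μ) • (1 : Matrix (Fin n) (Fin n) ℝ) - A).det)⁻¹
      * (α ⬝ᵥ (((s + μ) • (1 : Matrix (Fin n) (Fin n) ℝ) - A).adjugate *ᵥ b)) with htt_def
  have httK : ∀ s : ℝ, tt s
      = α ⬝ᵥ (((s + μ) • (1 : Matrix (Fin n) (Fin n) ℝ) - A)⁻¹ *ᵥ b) := by
    intro s
    rw [htt_def]
    simp only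
    rw [Matrix.inv_def, Ring.inverse_eq_inv', Matrix.smul_mulVec, dotProduct_smul,
      smul_eq_mul]
  have httB : ∀ s : ℝ, 0 ≤ s → 0 ≤ tt s ∧ tt s ≤ 1 := by
    intro s hs
    rw [httK s, hb_def]
    exact tau_nu_bounds hoff hrow hα0 hα1 (show (0:ℝ) < s + μ by linarith)
  set F : ℝ → ℝ := fun s => (s + (ρJ + μJ - φJ)) * (s + (μ + γV)) * (s + (μ + γR))
      - tt s * (ρJ * φV * (s + (μ + γR)) + γR * γV * (s + (ρJ + μJ - φJ))) with hF_def
  clear_value b tt F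
  have hτtt : tt 0 = tau A α μ := by
    rw [httK 0]
    norm_num
    simp only [tau, ← hb_def]
  have hF0 : F 0 ≤ 0 := by
    rw [hF_def]
    simp only [zero_add]
    rw [hτtt]
    linarith
  set s₁ := 1 + ρJ * φV + γR * γV with hs₁_def
  have hpq : 0 ≤ ρJ * φV := mul_nonneg hρJ.le hφV
  have hpq2 : 0 < γR * γV := mul_pos hγR hγV
  have hs₁1 : 1 ≤ s₁ := by rw [hs₁_def]; linarith
  have hs₁0 : (0:ℝ) ≤ s₁ := by linarith
  clear_value s₁
  have hFs₁ : 0 < F s₁ := by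
    obtain ⟨htt0, htt1⟩ := httB s₁ hs₁0
    rw [hF_def]
    simp only
    have hk₁0 : 0 ≤ ρJ * φV * (s₁ + (μ + γR)) + γR * γV * (s₁ + (ρJ + μJ - φJ)) :=
      add_nonneg (mul_nonneg hpq (by linarith)) (mul_nonneg hpq2.le (by linarith))
    have h1 : tt s₁ * (ρJ * φV * (s₁ + (μ + γR)) + γR * γV * (s₁ + (ρJ + μJ - φJ)))
        ≤ ρJ * φV * (s₁ + (μ + γR)) + γR * γV * (s₁ + (ρJ + μJ - φJ)) :=
      mul_le_of_le_one_left hk₁0 htt1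
    have e1 : ρJ * φV * (s₁ + (μ + γR))
        ≤ ρJ * φV * ((s₁ + (ρJ + μJ - φJ)) * (s₁ + (μ + γR))) := by
      nlinarith [mul_nonneg (mul_nonneg hpq (show (0:ℝ) ≤ s₁ + (μ + γR) by linarith))
        (show (0:ℝ) ≤ s₁ + (ρJ + μJ - φJ) - 1 by linarith)]
    have e2 : γR * γV * (s₁ + (ρJ + μJ - φJ))
        ≤ γR * γV * ((s₁ + (ρJ + μJ - φJ)) * (s₁ + (μ + γR))) := by
      nlinarith [mul_nonneg (mul_nonneg hpq2.le (show (0:ℝ) ≤ s₁ + (ρJ + μJ - φJ) by linarith))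
        (show (0:ℝ) ≤ s₁ + (μ + γR) - 1 by linarith)]
    have e3 : (ρJ * φV + γR * γV) * ((s₁ + (ρJ + μJ - φJ)) * (s₁ + (μ + γR)))
        < (s₁ + (μ + γV)) * ((s₁ + (ρJ + μJ - φJ)) * (s₁ + (μ + γR))) := by
      apply mul_lt_mul_of_pos_right
      · rw [hs₁_def]; linarith
      · exact mul_pos (by linarith) (by linarith)
    rw [add_mul] at e3
    have e6 : (s₁ + (ρJ + μJ - φJ)) * (s₁ + (μ + γV)) * (s₁ + (μ + γR))
        = (s₁ + (μ + γV)) * ((s₁ + (ρJ + μJ - φJ)) * (s₁ + (μ + γR))) := by ring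
    linarith [e1, e2, e3, h1, e6]
  have hPc : Continuous fun s : ℝ => (s + μ) • (1 : Matrix (Fin n) (Fin n) ℝ) - A :=
    ((continuous_id.add continuous_const).smul continuous_const).sub continuous_const
  have hdetne : ∀ s ∈ Set.Icc (0:ℝ) s₁,
      ((s + μ) • (1 : Matrix (Fin n) (Fin n) ℝ) - A).det ≠ 0 := by
    intro s hs
    exact isUnit_iff_ne_zero.mp
      (subgen_resolvent hoff hrow (show (0:ℝ) < s + μ by linarith [hs.1])).1
  have httc : ContinuousOn tt (Set.Icc 0 s₁) := by
    rw [htt_def]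
    exact (hPc.matrix_det.continuousOn.inv₀ hdetne).mul
      (continuous_const.dotProduct
        (hPc.matrix_adjugate.matrix_mulVec continuous_const)).continuousOn
  have hFc : ContinuousOn F (Set.Icc 0 s₁) := by
    rw [hF_def]
    apply ContinuousOn.sub
    · exact (by fun_prop : Continuous fun s : ℝ =>
        (s + (ρJ + μJ - φJ)) * (s + (μ + γV)) * (s + (μ + γR))).continuousOn
    · exact httc.mul (by fun_prop : Continuous fun s : ℝ =>
        ρJ * φV * (s + (μ + γR)) + γR * γV * (s + (ρJ + μJ - φJ))).continuousOn
  have h0mem : (0:ℝ) ∈ Set.Icc (F 0) (F s₁) := ⟨hF0, hFs₁.le⟩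
  obtain ⟨s₀, hs₀mem, hFs₀⟩ := intermediate_value_Icc hs₁0 hFc h0mem
  obtain ⟨hs₀0, hs₀1⟩ := hs₀mem
  have hν : 0 < s₀ + μ := by linarith
  obtain ⟨hdet₀, -, -⟩ := subgen_resolvent hoff hrow (A := A) hν
  set K₀ := ((s₀ + μ) • (1 : Matrix (Fin n) (Fin n) ℝ) - A)⁻¹ with hK₀_def
  have hK₀P : K₀ * ((s₀ + μ) • (1 : Matrix (Fin n) (Fin n) ℝ) - A) = 1 :=
    Matrix.nonsing_inv_mul _ hdet₀
  have hPK₀T : ((s₀ + μ) • (1 : Matrix (Fin n) (Fin n) ℝ) - A)ᵀ * K₀ᵀ = 1 := by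
    rw [← Matrix.transpose_mul, hK₀P, Matrix.transpose_one]
  set xJ := φV * (s₀ + (μ + γR)) with hxJ_def
  set xV := (s₀ + (ρJ + μJ - φJ)) * (s₀ + (μ + γR)) with hxV_def
  set xR := γV * (s₀ + (ρJ + μJ - φJ)) with hxR_def
  set w := ρJ * xJ + γR * xR with hw_def
  set xB := K₀ᵀ *ᵥ (fun j => w * α j) with hxB_def
  have hATx : (Aᵀ - μ • (1 : Matrix (Fin n) (Fin n) ℝ)) *ᵥ xB
      = s₀ • xB - fun j => w * α j := by
    have hsplitA : Aᵀ - μ • (1 : Matrix (Fin n) (Fin n) ℝ)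
        = s₀ • (1 : Matrix (Fin n) (Fin n) ℝ)
          - ((s₀ + μ) • (1 : Matrix (Fin n) (Fin n) ℝ) - A)ᵀ := by
      rw [Matrix.transpose_sub, Matrix.transpose_smul, Matrix.transpose_one]
      module
    have h9 : ((s₀ + μ) • (1 : Matrix (Fin n) (Fin n) ℝ) - A)ᵀ *ᵥ xB = fun j => w * α j := by
      rw [hxB_def, Matrix.mulVec_mulVec, hPK₀T, Matrix.one_mulVec]
    rw [hsplitA, Matrix.sub_mulVec, h9, Matrix.smul_mulVec, Matrix.one_mulVec]
  have hbxB : b ⬝ᵥ xB = w * tt s₀ := by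
    rw [hxB_def, Matrix.dotProduct_mulVec, Matrix.vecMul_transpose, httK s₀]
    simp only [dotProduct]
    rw [Finset.mul_sum]
    exact Finset.sum_congr rfl fun j _ => by ring
  have hFs₀' : (s₀ + (ρJ + μJ - φJ)) * (s₀ + (μ + γV)) * (s₀ + (μ + γR))
      = tt s₀ * (ρJ * φV * (s₀ + (μ + γR)) + γR * γV * (s₀ + (ρJ + μJ - φJ))) := by
    rw [hF_def] at hFs₀
    simp only at hFs₀
    linarith
  have hxV0 : 0 < xV := by
    rw [hxV_def]
    exact mul_pos (by linarith) (by linarith)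
  clear_value K₀ xJ xV xR w xB
  have hveq : Mmat A α μ γV γR ρJ μJ φJ φV *ᵥ
      Sum.elim (fun _ => xJ) (Sum.elim xB (Sum.elim (fun _ => xV) (fun _ => xR)))
      = s₀ • Sum.elim (fun _ => xJ) (Sum.elim xB (Sum.elim (fun _ => xV) (fun _ => xR))) := by
    rw [Mmat_mulVec]
    funext i
    rcases i with i0 | i
    · simp only [Sum.elim_inl, Pi.smul_apply, smul_eq_mul]
      rw [hxJ_def, hxV_def]; ring
    rcases i with k | i
    · simp only [Sum.elim_inr, Sum.elim_inl, Pi.smul_apply, smul_eq_mul]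
      rw [hATx]
      simp only [Pi.sub_apply, Pi.smul_apply, smul_eq_mul]
      rw [hw_def]; ring
    rcases i with i0 | i0
    · simp only [Sum.elim_inr, Sum.elim_inl, Pi.smul_apply, smul_eq_mul]
      rw [← hb_def, hbxB]
      have hwk : w = ρJ * φV * (s₀ + (μ + γR)) + γR * γV * (s₀ + (ρJ + μJ - φJ)) := by
        rw [hw_def, hxJ_def, hxR_def]; ring
      rw [hwk, hxV_def]
      linear_combination -hFs₀'
    · simp only [Sum.elim_inr, Pi.smul_apply, smul_eq_mul]
      rw [hxV_def, hxR_def]; ring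
  have hvne : Sum.elim (fun _ => xJ)
      (Sum.elim xB (Sum.elim (fun _ => xV) (fun _ => xR))) ≠ (0 : DemogIdx n → ℝ) := by
    intro h
    have h2 := congrFun h (Sum.inr (Sum.inr (Sum.inl 0)))
    simp only [Sum.elim_inr, Sum.elim_inl, Pi.zero_apply] at h2
    linarith
  have hspec := real_eig_mem_spectrum hvne hveq
  have hre := hstab _ hspec
  rw [Complex.ofReal_re] at hre
  linarith

end Main2
open Matrix Finset

/-- **Stability of the extinction equilibrium via the linearization.**
If every complex eigenvalue of `A` has negative real part, then every complex
eigenvalue of the Jacobian `M` has negative real part if and only if the basic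
offspring number `N₀` is less than one. -/
theorem extinction_equilibrium_stability_iff
    (n : ℕ) (hn : 1 ≤ n) (A : Matrix (Fin n) (Fin n) ℝ)
    (hoff : ∀ i j, i ≠ j → 0 ≤ A i j)
    (hrow : ∀ i, ∑ j, A i j ≤ 0)
    (hA : ∀ z ∈ spectrum ℂ (A.map (Complex.ofReal ·)), z.re < 0)
    (α : Fin n → ℝ) (hα0 : ∀ i, 0 ≤ α i) (hα1 : ∑ i, α i = 1)
    (μ γV γR ρJ μJ φJ φV : ℝ)
    (hμ : 0 < μ) (hγV : 0 < γV) (hγR : 0 < γR) (hρJ : 0 < ρJ) (hμJ : 0 < μJ)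
    (hφJ : 0 ≤ φJ) (hφV : 0 ≤ φV) (hφJ' : φJ < ρJ + μJ) :
    (∀ z ∈ spectrum ℂ ((Mmat A α μ γV γR ρJ μJ φJ φV).map (Complex.ofReal ·)), z.re < 0) ↔
      (ρJ / ((ρJ + μJ) - φJ)) * (φV / (μ + γV)) * tau A α μ * nG A α μ γV γR < 1 := by
  have ha : 0 < ρJ + μJ - φJ := by linarith
  have hc : 0 < μ + γV := by linarith
  have hd : 0 < μ + γR := by linarith
  obtain ⟨hτ0, hτ1⟩ := tau_nu_bounds hoff hrow hα0 hα1 (A := A) hμ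
  have hτ0' : 0 ≤ tau A α μ := hτ0
  have hτ1' : tau A α μ ≤ 1 := hτ1
  have h1 : γR / (μ + γR) < 1 := (div_lt_one hd).mpr (by linarith)
  have h2 : γV / (μ + γV) < 1 := (div_lt_one hc).mpr (by linarith)
  have h3 : 0 ≤ γR / (μ + γR) := by positivity
  have h4 : 0 ≤ γV / (μ + γV) := by positivity
  have hprod : tau A α μ * (γR / (μ + γR)) * (γV / (μ + γV)) < 1 := by
    have hp1 : tau A α μ * (γR / (μ + γR)) ≤ γR / (μ + γR) := mul_le_of_le_one_left h3 hτ1'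
    have hp0 : 0 ≤ tau A α μ * (γR / (μ + γR)) := mul_nonneg hτ0' h3
    have hp2 : tau A α μ * (γR / (μ + γR)) * (γV / (μ + γV))
        ≤ (γR / (μ + γR)) * (γV / (μ + γV)) := mul_le_mul_of_nonneg_right hp1 h4
    have hp3 : (γR / (μ + γR)) * (γV / (μ + γV)) ≤ γR / (μ + γR) :=
      mul_le_of_le_one_right h3 h2.le
    linarith
  have hD : 0 < 1 - tau A α μ * (γR / (μ + γR)) * (γV / (μ + γV)) := by linarith
  have hacd : 0 < (ρJ + μJ - φJ) * (μ + γV) * (μ + γR) := by positivity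
  have hkey : (ρJ + μJ - φJ) * (μ + γV) * (μ + γR)
        - tau A α μ * (ρJ * φV * (μ + γR) + γR * γV * (ρJ + μJ - φJ))
      = ((1 - tau A α μ * (γR / (μ + γR)) * (γV / (μ + γV)))
          - ρJ / ((ρJ + μJ) - φJ) * (φV / (μ + γV)) * tau A α μ)
        * ((ρJ + μJ - φJ) * (μ + γV) * (μ + γR)) := by
    field_simp
    ring
  have hNiff : ((ρJ / ((ρJ + μJ) - φJ)) * (φV / (μ + γV)) * tau A α μ * nG A α μ γV γR < 1)
      ↔ 0 < (ρJ + μJ - φJ) * (μ + γV) * (μ + γR)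
          - tau A α μ * (ρJ * φV * (μ + γR) + γR * γV * (ρJ + μJ - φJ)) := by
    rw [nG, ← div_eq_mul_inv, div_lt_one hD]
    constructor
    · intro h
      rw [hkey]
      exact mul_pos (by linarith) hacd
    · intro h
      rw [hkey] at h
      by_contra hcon
      push_neg at hcon
      nlinarith [mul_nonneg (neg_nonneg.mpr (by linarith :
        (1 - tau A α μ * (γR / (μ + γR)) * (γV / (μ + γV)))
          - ρJ / ((ρJ + μJ) - φJ) * (φV / (μ + γV)) * tau A α μ ≤ 0)) hacd.le]
  rw [hNiff]
  constructor
  · intro hstab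
    exact detS_of_stability A hoff hrow α hα0 hα1 μ γV γR ρJ μJ φJ φV
      hμ hγV hγR hρJ hμJ hφJ hφV hφJ' hstab
  · intro hdetS
    exact stability_of_detS A hoff hrow α hα0 hα1 μ γV γR ρJ μJ φJ φV
      hμ hγV hγR hρJ hμJ hφJ hφV hφJ' hdetS
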